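/- Let X be a finite set, R : X → ℝ with R(x) > 0 for all x, and R' : X → ℝ with R'(x) ≥ 0, where R' is supported on a subset X_sub ⊆ X (i.e., R'(x) = 0 for x ∉ X_sub). Let Z* = ∑_{x∈X} R(x), Z*_sub = ∑_{x∈X_sub} R(x), Λ = Z*/(Z* + ∑_x R'(x)), and define P(x) = R(x)/Z* and π(x) = (R(x)+R'(x))/(Z* + ∑_x R'(x)). Then TV(P, π) ≥ ((Z* − Z*_sub)/Z*)·(1 − Λ). -/

import Mathlib

open Finset Real

theorem stmt_2 (X : Type*) [Fintype X] [Nonempty X] (Xsub : Finset X) (R R' : X → ℝ)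
    (hR : ∀ x, 0 < R x) (hR' : ∀ x, 0 ≤ R' x)
    (hsupp : ∀ x ∉ Xsub, R' x = 0) :
    (1/2) * ∑ x, |R x / (∑ y, R y) - (R x + R' x) / ((∑ y, R y) + ∑ y, R' y)|
      ≥ (((∑ y, R y) - ∑ y ∈ Xsub, R y) / (∑ y, R y))
          * (1 - (∑ y, R y) / ((∑ y, R y) + ∑ y, R' y)) := by
  classical
  set Z := ∑ y, R y with hZ
  set T := ∑ y, R' y with hT
  have hZpos : 0 < Z := Finset.sum_pos (fun x _ => hR x) Finset.univ_nonempty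
  have hTnn : 0 ≤ T := Finset.sum_nonneg (fun x _ => hR' x)
  have hZT : 0 < Z + T := by linarith
  set f : X → ℝ := fun x => R x / Z - (R x + R' x) / (Z + T) with hf
  have hsum : ∑ x, f x = 0 := by
    simp only [hf, Finset.sum_sub_distrib, ← Finset.sum_div, Finset.sum_add_distrib,
      ← hZ, ← hT]
    field_simp
    ring
  have h1 : ∑ x ∈ Xsubᶜ, f x + ∑ x ∈ Xsub, f x = 0 := by
    rw [Finset.sum_compl_add_sum]; exact hsum
  have h2 : ∑ x ∈ Xsubᶜ, f x ≤ ∑ x ∈ Xsubᶜ, |f x| :=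
    Finset.sum_le_sum fun x _ => le_abs_self _
  have h3 : -∑ x ∈ Xsub, f x ≤ ∑ x ∈ Xsub, |f x| := by
    rw [← Finset.sum_neg_distrib]
    exact Finset.sum_le_sum fun x _ => neg_le_abs _
  have h4 : ∑ x ∈ Xsubᶜ, |f x| + ∑ x ∈ Xsub, |f x| = ∑ x, |f x| :=
    Finset.sum_compl_add_sum _ _
  have key : ∑ x ∈ Xsubᶜ, f x ≤ (1/2) * ∑ x, |f x| := by linarith
  have hfc : ∀ x ∈ Xsubᶜ, f x = R x * (1/Z - 1/(Z+T)) := by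
    intro x hx
    rw [hf]
    simp only [hsupp x (Finset.mem_compl.mp hx)]
    ring
  have hRc : ∑ x ∈ Xsubᶜ, R x = Z - ∑ y ∈ Xsub, R y := by
    have := Finset.sum_compl_add_sum Xsub R
    linarith
  have heq : ∑ x ∈ Xsubᶜ, f x
      = ((Z - ∑ y ∈ Xsub, R y) / Z) * (1 - Z/(Z+T)) := by
    rw [Finset.sum_congr rfl hfc, ← Finset.sum_mul, hRc]
    field_simp
  rw [ge_iff_le, ← heq]
  exact key
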